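/- Let b: [0,1] → ℝ and σ²: [0,1] → ℝ be continuous with σ²(v) > 0 for all v ∈ [0,1]. Set B(u) = ∫_0^u b(v) dv and b̄ = B(1), and assume B(u) > b̄·u for all u ∈ (0,1). Define Ψ(u) = ∫_{1/2}^u σ²(v)/(2(B(v) − b̄·v)) dv for u ∈ (0,1). Then Ψ is a strictly increasing continuous bijection from (0,1) onto ℝ; in particular Ψ(u) → −∞ as u → 0⁺ and Ψ(u) → +∞ as u → 1⁻. -/

import Mathlib

open Set Filter

set_option maxHeartbeats 1000000

/-- Under the Oleinik entropy condition, the inverse distribution function `Ψ` of the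
travelling-wave profile is a strictly increasing continuous bijection from `(0,1)`
onto `ℝ`, diverging to `-∞` at `0⁺` and to `+∞` at `1⁻`. -/
theorem Psi_bijection (b σ2 : ℝ → ℝ)
    (hbc : ContinuousOn b (Icc 0 1)) (hσc : ContinuousOn σ2 (Icc 0 1))
    (hσ : ∀ v ∈ Icc (0 : ℝ) 1, 0 < σ2 v)
    (B : ℝ → ℝ) (hB : ∀ u, B u = ∫ v in (0 : ℝ)..u, b v)
    (bbar : ℝ) (hbbar : bbar = B 1)
    (hole : ∀ u ∈ Ioo (0 : ℝ) 1, B u > bbar * u)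
    (Ψ : ℝ → ℝ)
    (hΨ : ∀ u, Ψ u = ∫ v in (1 / 2 : ℝ)..u, σ2 v / (2 * (B v - bbar * v))) :
    StrictMonoOn Ψ (Ioo 0 1) ∧ ContinuousOn Ψ (Ioo 0 1) ∧
      BijOn Ψ (Ioo 0 1) univ ∧
      Tendsto Ψ (nhdsWithin 0 (Ioo 0 1)) atBot ∧
      Tendsto Ψ (nhdsWithin 1 (Ioo 0 1)) atTop := by
  have h12 : (1 / 2 : ℝ) ∈ Ioo (0 : ℝ) 1 := by norm_num
  set f : ℝ → ℝ := fun v => σ2 v / (2 * (B v - bbar * v)) with hfdef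
  have hΨf : Ψ = fun u => ∫ v in (1 / 2 : ℝ)..u, f v := funext hΨ
  -- continuity of B
  have hBcont : ContinuousOn B (Icc 0 1) := by
    have hbint : MeasureTheory.IntegrableOn b (uIcc (0 : ℝ) 1) := by
      rw [uIcc_of_le (by norm_num : (0:ℝ) ≤ 1)]
      exact hbc.integrableOn_compact isCompact_Icc
    have := intervalIntegral.continuousOn_primitive_interval hbint
    rw [uIcc_of_le (by norm_num : (0:ℝ) ≤ 1)] at this
    have hBeq : B = fun u => ∫ v in (0 : ℝ)..u, b v := funext hB
    rw [hBeq]; exact this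
  have hden : ∀ v ∈ Ioo (0:ℝ) 1, 0 < B v - bbar * v := fun v hv => sub_pos.mpr (hole v hv)
  have hfc : ContinuousOn f (Ioo 0 1) := by
    apply ContinuousOn.div (hσc.mono Ioo_subset_Icc_self)
    · exact continuousOn_const.mul ((hBcont.mono Ioo_subset_Icc_self).sub
        (continuousOn_const.mul continuousOn_id))
    · exact fun v hv => (mul_pos two_pos (hden v hv)).ne'
  have hfint : ∀ {a c : ℝ}, a ∈ Ioo (0:ℝ) 1 → c ∈ Ioo (0:ℝ) 1 →
      IntervalIntegrable f MeasureTheory.volume a c := fun ha hc =>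
    (hfc.mono (Set.ordConnected_Ioo.uIcc_subset ha hc)).intervalIntegrable
  have hderiv : ∀ u ∈ Ioo (0:ℝ) 1, HasDerivAt Ψ (f u) u := by
    intro u hu
    rw [hΨf]
    exact intervalIntegral.integral_hasDerivAt_right (hfint h12 hu)
      (hfc.stronglyMeasurableAtFilter isOpen_Ioo u hu)
      (hfc.continuousAt (isOpen_Ioo.mem_nhds hu))
  have hΨcont : ContinuousOn Ψ (Ioo 0 1) := fun u hu =>
    (hderiv u hu).continuousAt.continuousWithinAt
  have hfpos : ∀ v ∈ Ioo (0:ℝ) 1, 0 < f v := fun v hv =>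
    div_pos (hσ v (Ioo_subset_Icc_self hv)) (mul_pos two_pos (hden v hv))
  have hmono : StrictMonoOn Ψ (Ioo 0 1) := by
    apply strictMonoOn_of_deriv_pos (convex_Ioo 0 1) hΨcont
    intro x hx
    rw [interior_Ioo] at hx
    rw [(hderiv x hx).deriv]
    exact hfpos x hx
  -- bounds
  obtain ⟨M0, hM0⟩ := isCompact_Icc.exists_bound_of_continuousOn hbc
  set M := max M0 1 with hMdef
  have hMpos : (0:ℝ) < M := lt_of_lt_of_le one_pos (le_max_right _ _)
  have hMb : ∀ x ∈ Icc (0:ℝ) 1, |b x| ≤ M := fun x hx => (hM0 x hx).trans (le_max_left _ _)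
  have hBle : ∀ v ∈ Icc (0:ℝ) 1, |B v| ≤ M * v := by
    intro v hv
    rw [hB]
    have h := intervalIntegral.norm_integral_le_of_norm_le_const (C := M) (a := 0) (b := v)
      (f := b) (fun x hx => by
        rw [Set.uIoc_of_le hv.1] at hx
        exact hMb x ⟨hx.1.le, hx.2.trans hv.2⟩)
    simpa [Real.norm_eq_abs, abs_of_nonneg hv.1] using h
  have hbbarle : |bbar| ≤ M := by
    have := hBle 1 (by norm_num)
    rw [hbbar]; simpa using this
  have hB1sub : ∀ v ∈ Icc (0:ℝ) 1, |B 1 - B v| ≤ M * (1 - v) := by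
    intro v hv
    have hint1 : IntervalIntegrable b MeasureTheory.volume 0 1 := by
      apply ContinuousOn.intervalIntegrable
      rwa [uIcc_of_le (by norm_num : (0:ℝ) ≤ 1)]
    have hintv : IntervalIntegrable b MeasureTheory.volume 0 v := by
      apply ContinuousOn.intervalIntegrable
      rw [uIcc_of_le hv.1]
      exact hbc.mono (Icc_subset_Icc le_rfl hv.2)
    have h1 : B 1 - B v = ∫ x in v..1, b x := by
      rw [hB, hB]
      exact intervalIntegral.integral_interval_sub_left hint1 hintv
    rw [h1]
    have h := intervalIntegral.norm_integral_le_of_norm_le_const (C := M) (a := v) (b := 1)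
      (f := b) (fun x hx => by
        rw [Set.uIoc_of_le hv.2] at hx
        exact hMb x ⟨hv.1.trans hx.1.le, hx.2⟩)
    simpa [Real.norm_eq_abs, abs_of_nonneg (sub_nonneg.mpr hv.2)] using h
  have hub0 : ∀ v ∈ Ioo (0:ℝ) 1, B v - bbar * v ≤ 2 * M * v := by
    intro v hv
    have h1 : B v ≤ M * v := (le_abs_self _).trans (hBle v (Ioo_subset_Icc_self hv))
    have h2 := abs_le.mp hbbarle
    nlinarith [hv.1.le]
  have hub1 : ∀ v ∈ Ioo (0:ℝ) 1, B v - bbar * v ≤ 2 * M * (1 - v) := by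
    intro v hv
    have h1 := abs_le.mp (hB1sub v (Ioo_subset_Icc_self hv))
    have h2 := abs_le.mp hbbarle
    have h3 : B v - bbar * v = (B v - B 1) + bbar * (1 - v) := by rw [hbbar]; ring
    nlinarith [hv.2.le]
  -- minimum of σ2
  obtain ⟨v0, hv0, hδmin⟩ := isCompact_Icc.exists_isMinOn
    (Set.nonempty_Icc.mpr (by norm_num : (0:ℝ) ≤ 1)) hσc
  have hδpos : 0 < σ2 v0 := hσ v0 hv0
  set δ := σ2 v0 with hδdef
  have hδle : ∀ v ∈ Icc (0:ℝ) 1, δ ≤ σ2 v := fun v hv => (isMinOn_iff.mp hδmin) v hv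
  set c := δ / (4 * M) with hcdef
  have hcpos : 0 < c := div_pos hδpos (by positivity)
  have hflb0 : ∀ v ∈ Ioo (0:ℝ) 1, c * (1 / v) ≤ f v := by
    intro v hv
    have hd : 0 < 2 * (B v - bbar * v) := mul_pos two_pos (hden v hv)
    have h4 : 2 * (B v - bbar * v) ≤ 4 * M * v := by have := hub0 v hv; linarith
    have heq : c * (1 / v) = δ / (4 * M * v) := by
      rw [hcdef, div_mul_div_comm, mul_one]
    rw [heq]
    exact div_le_div₀ (hσ v (Ioo_subset_Icc_self hv)).le (hδle v (Ioo_subset_Icc_self hv)) hd h4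
  have hflb1 : ∀ v ∈ Ioo (0:ℝ) 1, c * (1 / (1 - v)) ≤ f v := by
    intro v hv
    have hd : 0 < 2 * (B v - bbar * v) := mul_pos two_pos (hden v hv)
    have h4 : 2 * (B v - bbar * v) ≤ 4 * M * (1 - v) := by have := hub1 v hv; linarith
    have heq : c * (1 / (1 - v)) = δ / (4 * M * (1 - v)) := by
      rw [hcdef, div_mul_div_comm, mul_one]
    rw [heq]
    exact div_le_div₀ (hσ v (Ioo_subset_Icc_self hv)).le (hδle v (Ioo_subset_Icc_self hv)) hd h4
  -- upper bound of Ψ near 0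
  have hΨub : ∀ u, 0 < u → u ≤ 1 / 2 → Ψ u ≤ c * (Real.log u - Real.log (1 / 2)) := by
    intro u hu0 hu2
    have huI : u ∈ Ioo (0:ℝ) 1 := ⟨hu0, by linarith⟩
    have hsub : uIcc u (1/2) ⊆ Ioo (0:ℝ) 1 := Set.ordConnected_Ioo.uIcc_subset huI h12
    have hfi : IntervalIntegrable f MeasureTheory.volume u (1/2) := hfint huI h12
    have hgi : IntervalIntegrable (fun v => c * (1 / v)) MeasureTheory.volume u (1/2) := by
      apply ContinuousOn.intervalIntegrable
      apply continuousOn_const.mul (continuousOn_const.div continuousOn_id ?_)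
      intro x hx
      rw [uIcc_of_le hu2] at hx
      exact (lt_of_lt_of_le hu0 hx.1).ne'
    have hle : ∫ v in u..(1/2:ℝ), c * (1 / v) ≤ ∫ v in u..(1/2:ℝ), f v := by
      apply intervalIntegral.integral_mono_on hu2 hgi hfi
      intro x hx
      exact hflb0 x (hsub (by rw [uIcc_of_le hu2]; exact hx))
    have h0 : (0:ℝ) ∉ uIcc u (1/2) := by
      rw [uIcc_of_le hu2]
      intro h
      exact absurd h.1 (not_le.mpr hu0)
    have hlog : ∫ v in u..(1/2:ℝ), c * (1 / v) = c * (Real.log (1/2) - Real.log u) := by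
      rw [intervalIntegral.integral_const_mul, integral_one_div h0,
        Real.log_div (by norm_num) hu0.ne']
    have hΨeq : Ψ u = - ∫ v in u..(1/2:ℝ), f v := by
      rw [hΨ, intervalIntegral.integral_symm]
    rw [hlog] at hle
    have hring : c * (Real.log u - Real.log (1/2)) = -(c * (Real.log (1/2) - Real.log u)) := by
      ring
    rw [hΨeq, hring]
    linarith
  -- lower bound of Ψ near 1
  have hΨlb : ∀ u, 1 / 2 ≤ u → u < 1 → c * (Real.log (1/2) - Real.log (1 - u)) ≤ Ψ u := by
    intro u hu2 hu1
    have huI : u ∈ Ioo (0:ℝ) 1 := ⟨by linarith, hu1⟩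
    have hsub : uIcc (1/2) u ⊆ Ioo (0:ℝ) 1 := Set.ordConnected_Ioo.uIcc_subset h12 huI
    have hfi : IntervalIntegrable f MeasureTheory.volume (1/2) u := hfint h12 huI
    have hgi : IntervalIntegrable (fun v => c * (1 / (1 - v))) MeasureTheory.volume (1/2) u := by
      apply ContinuousOn.intervalIntegrable
      apply continuousOn_const.mul
        (continuousOn_const.div (continuousOn_const.sub continuousOn_id) ?_)
      intro x hx
      rw [uIcc_of_le hu2] at hx
      exact (sub_pos.mpr (lt_of_le_of_lt hx.2 hu1)).ne'
    have hle : ∫ v in (1/2:ℝ)..u, c * (1 / (1 - v)) ≤ ∫ v in (1/2:ℝ)..u, f v := by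
      apply intervalIntegral.integral_mono_on hu2 hgi hfi
      intro x hx
      exact hflb1 x (hsub (by rw [uIcc_of_le hu2]; exact hx))
    have h1u : 0 < 1 - u := sub_pos.mpr hu1
    have h0 : (0:ℝ) ∉ uIcc (1 - u) (1/2) := by
      rw [uIcc_of_le (by linarith : 1 - u ≤ 1/2)]
      intro h
      exact absurd h.1 (not_le.mpr h1u)
    have hlog : ∫ v in (1/2:ℝ)..u, c * (1 / (1 - v)) = c * (Real.log (1/2) - Real.log (1 - u)) := by
      rw [intervalIntegral.integral_const_mul]
      congr 1
      have hcomp := intervalIntegral.integral_comp_sub_left (a := (1/2:ℝ)) (b := u)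
        (fun x => 1 / x) 1
      rw [show (1:ℝ) - 1/2 = 1/2 by norm_num] at hcomp
      rw [hcomp, integral_one_div h0,
        Real.log_div (by norm_num) h1u.ne']
    rw [hΨ u]
    rw [hlog] at hle
    exact hle
  -- tendsto at 0
  have ht0 : Tendsto Ψ (nhdsWithin 0 (Ioo 0 1)) atBot := by
    have hlogt : Tendsto (fun u => c * (Real.log u - Real.log (1/2)))
        (nhdsWithin 0 (Ioo 0 1)) atBot := by
      apply Tendsto.const_mul_atBot hcpos
      have h1 : Tendsto Real.log (nhdsWithin 0 (Ioo 0 1)) atBot :=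
        Real.tendsto_log_nhdsGT_zero.mono_left
          (nhdsWithin_mono 0 (fun x hx => hx.1))
      simpa [sub_eq_add_neg] using tendsto_atBot_add_const_right _ (-Real.log (1/2)) h1
    apply tendsto_atBot_mono' _ _ hlogt
    filter_upwards [self_mem_nhdsWithin,
      mem_nhdsWithin_of_mem_nhds (Iio_mem_nhds (by norm_num : (0:ℝ) < 1/2))] with u hu hu2
    exact hΨub u hu.1 (le_of_lt hu2)
  -- tendsto at 1
  have ht1 : Tendsto Ψ (nhdsWithin 1 (Ioo 0 1)) atTop := by
    have h1u : Tendsto (fun u : ℝ => 1 - u) (nhdsWithin 1 (Ioo 0 1)) (nhdsWithin 0 (Ioi 0)) := by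
      apply tendsto_nhdsWithin_of_tendsto_nhds_of_eventually_within
      · have hcont : Continuous (fun u : ℝ => 1 - u) := continuous_const.sub continuous_id
        have ht := (hcont.tendsto 1).mono_left
          (nhdsWithin_le_nhds : nhdsWithin (1:ℝ) (Ioo 0 1) ≤ nhds 1)
        rw [show (1:ℝ) - 1 = 0 from by norm_num] at ht
        exact ht
      · filter_upwards [self_mem_nhdsWithin] with u hu
        simpa using hu.2
    have hlogb : Tendsto (fun u : ℝ => Real.log (1 - u)) (nhdsWithin 1 (Ioo 0 1)) atBot :=
      Real.tendsto_log_nhdsGT_zero.comp h1u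
    have hlogt : Tendsto (fun u => c * (Real.log (1/2) - Real.log (1 - u)))
        (nhdsWithin 1 (Ioo 0 1)) atTop := by
      apply Tendsto.const_mul_atTop hcpos
      have := tendsto_atTop_add_const_left (nhdsWithin (1:ℝ) (Ioo 0 1)) (Real.log (1/2))
        (tendsto_neg_atTop_iff.mpr hlogb)
      simpa [sub_eq_add_neg] using this
    apply tendsto_atTop_mono' _ _ hlogt
    filter_upwards [self_mem_nhdsWithin,
      mem_nhdsWithin_of_mem_nhds (Ioi_mem_nhds (by norm_num : (1/2:ℝ) < 1))] with u hu hu2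
    exact hΨlb u (le_of_lt hu2) hu.2
  -- surjectivity
  have hne0 : (nhdsWithin (0:ℝ) (Ioo (0:ℝ) 1)).NeBot := by
    apply mem_closure_iff_nhdsWithin_neBot.mp
    rw [closure_Ioo (by norm_num : (0:ℝ) ≠ 1)]
    exact ⟨le_rfl, by norm_num⟩
  have hne1 : (nhdsWithin (1:ℝ) (Ioo (0:ℝ) 1)).NeBot := by
    apply mem_closure_iff_nhdsWithin_neBot.mp
    rw [closure_Ioo (by norm_num : (0:ℝ) ≠ 1)]
    exact ⟨by norm_num, le_rfl⟩
  have hsurj : SurjOn Ψ (Ioo 0 1) univ := by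
    intro y _
    obtain ⟨a, haΨ, haI⟩ :=
      ((ht0.eventually (eventually_lt_atBot y)).and self_mem_nhdsWithin).exists
    obtain ⟨d, hdΨ, hdI⟩ :=
      ((ht1.eventually (eventually_gt_atTop y)).and self_mem_nhdsWithin).exists
    have had : a < d := by
      rcases lt_trichotomy a d with h | h | h
      · exact h
      · exfalso; rw [h] at haΨ; linarith
      · exfalso; have := hmono hdI haI h; linarith
    have hIcc : Icc a d ⊆ Ioo (0:ℝ) 1 := fun x hx => ⟨lt_of_lt_of_le haI.1 hx.1,
      lt_of_le_of_lt hx.2 hdI.2⟩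
    have hy : y ∈ Icc (Ψ a) (Ψ d) := ⟨le_of_lt haΨ, le_of_lt hdΨ⟩
    have := intermediate_value_Icc had.le (hΨcont.mono hIcc) hy
    exact image_mono hIcc this
  exact ⟨hmono, hΨcont, ⟨fun x _ => mem_univ _, hmono.injOn, hsurj⟩, ht0, ht1⟩
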